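/- If a TPM process has no quantum memory, meaning the initial state ϱ_{A′E} is replaced by ℳ^EB(ϱ_{A′E}) = Σ_λ μ_λ ϱ^λ_{A′} ⊗ ϱ^λ_E for an entanglement-breaking channel on E, then the process operator decomposes as W = Σ_λ μ_λ η^λ_{A′} ⊗ N^λ_{A→B}, where each η^λ_{A′} is a density operator and each N^λ_{A→B} satisfies N^λ ⪰ 0 and Tr_B N^λ = id_A. -/

import Mathlib

open scoped Kronecker ComplexOrder
open Finset Matrix

/-- Partial trace over the second tensor factor. -/
noncomputable def ptSnd {m n : Type} [Fintype n] (M : Matrix (m × n) (m × n) ℂ) :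
    Matrix m m ℂ :=
  Matrix.of fun i j => ∑ k : n, M (i, k) (j, k)

/-- The process operator
`W = Tr_{EE′}[(ϱ^{Γ_E} ⊗ id_{ABE′})(id_{A′} ⊗ |U⟩⟩⟨⟨U|)]`
of a two-point-measurement experiment, written out entrywise, for a global
unitary `U : H_A ⊗ H_E → H_B ⊗ H_{E′}` and initial bipartite state `ϱ` on
`A′E`.  `W` acts on `A′ ⊗ A ⊗ B`. -/
noncomputable def procW {a' a b e e' : Type} [Fintype e] [Fintype e']
    (U : Matrix (b × e') (a × e) ℂ) (ϱ : Matrix (a' × e) (a' × e) ℂ) :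
    Matrix (a' × a × b) (a' × a × b) ℂ :=
  Matrix.of fun x y =>
    ∑ ε : e, ∑ ε'' : e, ∑ ε' : e',
      ϱ (x.1, ε) (y.1, ε'') * U (x.2.2, ε') (x.2.1, ε'') *
        (starRingEnd ℂ) (U (y.2.2, ε') (y.2.1, ε))

/-- If a TPM process has no quantum memory, i.e. the initial state
is `ℳ^EB(ϱ_{A′E}) = Σ_λ μ_λ ϱ^λ_{A′} ⊗ ϱ^λ_E` for an entanglement-breaking
channel on `E`, then the process operator decomposes as
`W = Σ_λ μ_λ η^λ_{A′} ⊗ N^λ_{A→B}` with each `η^λ_{A′}` a density operator and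
each `N^λ` the Choi operator of a channel (`N^λ ⪰ 0`, `Tr_B N^λ = id_A`). -/
lemma psd_sum {n ι : Type} [Fintype n] (s : Finset ι) (f : ι → Matrix n n ℂ)
    (h : ∀ i ∈ s, (f i).PosSemidef) : (∑ i ∈ s, f i).PosSemidef := by
  classical
  induction s using Finset.induction with
  | empty => simpa using Matrix.PosSemidef.zero
  | insert _ _ hx ih =>
    rw [Finset.sum_insert hx]
    exact Matrix.PosSemidef.add (h _ (Finset.mem_insert_self _ _))
      (ih fun i hi => h i (Finset.mem_insert_of_mem hi))

lemma sum_swap4 {e e' Λ : Type} [Fintype e] [Fintype e'] [Fintype Λ]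
    (f : Λ → e → e → e' → ℂ) :
    ∑ ε : e, ∑ ε'' : e, ∑ ε' : e', ∑ l : Λ, f l ε ε'' ε' =
      ∑ l : Λ, ∑ ε : e, ∑ ε'' : e, ∑ ε' : e', f l ε ε'' ε' :=
  calc ∑ ε : e, ∑ ε'' : e, ∑ ε' : e', ∑ l : Λ, f l ε ε'' ε'
      = ∑ ε : e, ∑ ε'' : e, ∑ l : Λ, ∑ ε' : e', f l ε ε'' ε' :=
        Finset.sum_congr rfl fun ε _ => Finset.sum_congr rfl fun ε'' _ => Finset.sum_comm
    _ = ∑ ε : e, ∑ l : Λ, ∑ ε'' : e, ∑ ε' : e', f l ε ε'' ε' :=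
        Finset.sum_congr rfl fun ε _ => Finset.sum_comm
    _ = ∑ l : Λ, ∑ ε : e, ∑ ε'' : e, ∑ ε' : e', f l ε ε'' ε' := Finset.sum_comm

theorem stmt_9 {a' a b e e' Λ : Type}
    [Fintype a'] [Fintype a] [Fintype b] [Fintype e] [Fintype e'] [Fintype Λ]
    [DecidableEq a'] [DecidableEq a] [DecidableEq b] [DecidableEq e] [DecidableEq e']
    [Nonempty a']
    (U : Matrix (b × e') (a × e) ℂ)
    (hU₁ : U * Uᴴ = 1) (hU₂ : Uᴴ * U = 1)
    (μ : Λ → ℝ) (hμ : ∀ l, 0 ≤ μ l) (hμ1 : ∑ l, μ l = 1)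
    (ϱA' : Λ → Matrix a' a' ℂ)
    (hϱA' : ∀ l, (ϱA' l).PosSemidef ∧ (ϱA' l).trace = 1)
    (ϱE : Λ → Matrix e e ℂ)
    (hϱE : ∀ l, (ϱE l).PosSemidef ∧ (ϱE l).trace = 1)
    (ϱ : Matrix (a' × e) (a' × e) ℂ)
    (hϱ : ϱ = ∑ l, ((μ l : ℝ) : ℂ) • (ϱA' l ⊗ₖ ϱE l)) :
    ∃ (η : Λ → Matrix a' a' ℂ) (N : Λ → Matrix (a × b) (a × b) ℂ),
      (∀ l, (η l).PosSemidef ∧ (η l).trace = 1) ∧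
      (∀ l, (N l).PosSemidef ∧ ptSnd (N l) = 1) ∧
      procW U ϱ = ∑ l, ((μ l : ℝ) : ℂ) • (η l ⊗ₖ N l) := by
  classical
  set A : e' → Matrix (a × b) e ℂ :=
    fun ε' => Matrix.of fun p ε'' => U (p.2, ε') (p.1, ε'') with hA
  set N : Λ → Matrix (a × b) (a × b) ℂ :=
    fun l => ∑ ε' : e', A ε' * (ϱE l)ᵀ * (A ε')ᴴ with hN
  have hNentry : ∀ l x y, N l x y =
      ∑ ε : e, ∑ ε'' : e, ∑ ε' : e',
        ϱE l ε ε'' * U (x.2, ε') (x.1, ε'') * (starRingEnd ℂ) (U (y.2, ε') (y.1, ε)) := by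
    intro l x y
    rw [hN]
    simp only [Matrix.sum_apply, Matrix.mul_apply, Matrix.conjTranspose_apply,
      Matrix.transpose_apply, hA, Matrix.of_apply, Finset.sum_mul, starRingEnd_apply]
    rw [Finset.sum_comm]
    refine Finset.sum_congr rfl fun ε _ => ?_
    rw [Finset.sum_comm]
    refine Finset.sum_congr rfl fun ε'' _ => Finset.sum_congr rfl fun ε' _ => ?_
    ring
  refine ⟨ϱA', N, hϱA', fun l => ⟨?_, ?_⟩, ?_⟩
  · exact psd_sum _ _ fun ε' _ =>
      ((hϱE l).1.transpose).mul_mul_conjTranspose_same (A ε')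
  · ext i j
    show (∑ β : b, N l (i, β) (j, β)) = (1 : Matrix a a ℂ) i j
    calc (∑ β : b, N l (i, β) (j, β))
        = ∑ ε : e, ∑ ε'' : e, ϱE l ε ε'' *
            ∑ β : b, ∑ ε' : e',
              star (U ((β, ε')) (j, ε)) * U ((β, ε')) (i, ε'') := by
          simp only [hNentry, starRingEnd_apply]
          rw [Finset.sum_comm]
          refine Finset.sum_congr rfl fun ε _ => ?_
          rw [Finset.sum_comm]
          refine Finset.sum_congr rfl fun ε'' _ => ?_
          rw [Finset.mul_sum]
          refine Finset.sum_congr rfl fun β _ => ?_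
          rw [Finset.mul_sum]
          refine Finset.sum_congr rfl fun ε' _ => ?_
          ring
      _ = ∑ ε : e, ∑ ε'' : e, ϱE l ε ε'' * (Uᴴ * U) (j, ε) (i, ε'') := by
          refine Finset.sum_congr rfl fun ε _ => Finset.sum_congr rfl fun ε'' _ => ?_
          rw [Matrix.mul_apply, Fintype.sum_prod_type]
          simp [Matrix.conjTranspose_apply]
      _ = (1 : Matrix a a ℂ) i j := by
          rw [hU₂]
          rcases eq_or_ne i j with rfl | hij
          · have h1 : ∀ ε ε'' : e,
                (1 : Matrix (a × e) (a × e) ℂ) (i, ε) (i, ε'') =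
                  if ε = ε'' then 1 else 0 := by
              intro ε ε''; simp [Matrix.one_apply, Prod.ext_iff]
            simp only [h1, mul_ite, mul_one, mul_zero, Finset.sum_ite_eq,
              Finset.mem_univ, if_true, Matrix.one_apply_eq]
            simpa [Matrix.trace, Matrix.diag] using (hϱE l).2
          · rw [Matrix.one_apply_ne hij]
            refine Finset.sum_eq_zero fun ε _ => Finset.sum_eq_zero fun ε'' _ => ?_
            rw [Matrix.one_apply_ne (fun h => hij (congrArg Prod.fst h).symm), mul_zero]
  · ext x y
    simp only [procW, Matrix.of_apply, hϱ, Matrix.sum_apply, Matrix.smul_apply,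
      Matrix.kroneckerMap_apply, smul_eq_mul, hNentry, Finset.sum_mul]
    rw [sum_swap4 (fun l ε ε'' ε' =>
      (μ l : ℂ) * (ϱA' l x.1 y.1 * ϱE l ε ε'') * U (x.2.2, ε') (x.2.1, ε'') *
        (starRingEnd ℂ) (U (y.2.2, ε') (y.2.1, ε)))]
    refine Finset.sum_congr rfl fun l _ => ?_
    simp only [Finset.mul_sum]
    refine Finset.sum_congr rfl fun ε _ => Finset.sum_congr rfl fun ε'' _ =>
      Finset.sum_congr rfl fun ε' _ => ?_
    ring
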